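/- For a multivariate rank dependent utility functional Φ(X) = E[Q_X(U)·φ(U)], if X and Z are μ-comonotonic then Φ(X + Z) = Φ(X) + Φ(Z). -/

import Mathlib

open MeasureTheory Filter
open scoped RealInnerProductSpace ENNReal

section Aux

variable {d : ℕ}
local notation "E" => EuclideanSpace ℝ (Fin d)

lemma line_tendsto {f : E → ℝ} {u g : E} (hg : HasGradientAt f g u) (v : E) :
    Tendsto (fun t : ℝ => (f (u + t • v) - f u) / t) (nhdsWithin 0 (Set.Ioi 0)) (nhds ⟪g, v⟫) := by
  have hc : HasDerivAt (fun t : ℝ => u + t • v) v 0 := by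
    simpa using ((hasDerivAt_id (0:ℝ)).smul_const v).const_add u
  have hfd : HasFDerivAt f (InnerProductSpace.toDual ℝ _ g) u := hasGradientAt_iff_hasFDerivAt.mp hg
  have h0 : u = (fun t : ℝ => u + t • v) 0 := by simp
  have hcomp : HasDerivAt (fun t : ℝ => f (u + t • v)) ⟪g, v⟫ 0 := by
    have := (h0 ▸ hfd).comp_hasDerivAt 0 hc
    have h' : HasDerivAt (f ∘ fun t : ℝ => u + t • v) ⟪g, v⟫ 0 := by
      simpa [InnerProductSpace.toDual_apply_apply] using this
    exact h'
  have hs := hasDerivAt_iff_tendsto_slope.mp hcomp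
  have heq : slope (fun t : ℝ => f (u + t • v)) 0 =ᶠ[nhdsWithin 0 (Set.Ioi 0)]
      (fun t : ℝ => (f (u + t • v) - f u) / t) := by
    filter_upwards with t
    simp [slope_def_field]
  exact Tendsto.congr' heq (hs.mono_left (nhdsWithin_mono _ (fun t ht => ne_of_gt ht)))

lemma convex_subgrad {f : E → ℝ} (hf : ConvexOn ℝ Set.univ f) {u g : E}
    (hg : HasGradientAt f g u) (x : E) : f u + ⟪g, x - u⟫ ≤ f x := by
  have hkey : ∀ t ∈ Set.Ioo (0:ℝ) 1, (f (u + t • (x - u)) - f u) / t ≤ f x - f u := by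
    intro t ht
    have hcvx := hf.2 (Set.mem_univ u) (Set.mem_univ x)
      (by linarith [ht.2] : (0:ℝ) ≤ 1 - t) ht.1.le (by ring)
    have hpt : (1 - t) • u + t • x = u + t • (x - u) := by module
    rw [hpt] at hcvx
    rw [div_le_iff₀ ht.1]
    simp only [smul_eq_mul] at hcvx
    nlinarith
  have hlim := line_tendsto hg (x - u)
  have h2 : ⟪g, x - u⟫ ≤ f x - f u := by
    refine le_of_tendsto hlim ?_
    filter_upwards [Ioo_mem_nhdsGT_of_mem (Set.mem_Ico.mpr ⟨le_refl (0:ℝ), zero_lt_one⟩)] with t ht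
    exact hkey t ht
  linarith

lemma subgrad_unique {f : E → ℝ} {u g y : E} (hg : HasGradientAt f g u)
    (hy : ∀ x, f u + ⟪y, x - u⟫ ≤ f x) : y = g := by
  have h : ∀ v : E, ⟪y, v⟫ ≤ ⟪g, v⟫ := by
    intro v
    have hlim := line_tendsto hg v
    refine ge_of_tendsto hlim ?_
    filter_upwards [self_mem_nhdsWithin] with t (ht : t ∈ Set.Ioi (0:ℝ))
    have h1 := hy (u + t • v)
    have h2 : ⟪y, (u + t • v) - u⟫ = t * ⟪y, v⟫ := by
      rw [add_sub_cancel_left, real_inner_smul_right]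
    rw [le_div_iff₀ ht, mul_comm]
    linarith
  have h2 : ⟪y - g, y - g⟫ ≤ 0 := by
    have h3 := h (y - g)
    rw [inner_sub_left] at *
    linarith [h (y - g)]
  have h4 : y - g = 0 := by
    rw [← @inner_self_eq_zero ℝ]
    exact le_antisymm h2 real_inner_self_nonneg
  exact sub_eq_zero.mp h4

lemma convex_ae_diff (f : E → ℝ) (hf : ConvexOn ℝ Set.univ f) :
    ∀ᵐ x ∂(volume : Measure E), DifferentiableAt ℝ f x := by
  have hcont : Continuous f := hf.locallyLipschitz.continuous
  have h : ∀ n : ℕ, ∀ᵐ x ∂(volume : Measure E),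
      x ∈ Metric.ball (0:E) n → DifferentiableAt ℝ f x := by
    intro n
    have hb : Bornology.IsBounded (f '' Metric.ball (0:E) ((n:ℝ)+1)) := by
      refine (((isCompact_closedBall (0:E) ((n:ℝ)+1)).image hcont).isBounded).subset ?_
      exact Set.image_mono Metric.ball_subset_closedBall
    obtain ⟨K, hK⟩ := ConvexOn.exists_lipschitzOnWith_of_isBounded
      (hf.subset (Set.subset_univ _) (convex_ball _ _))
      (lt_add_one (n:ℝ)) hb
    have hae := hK.ae_differentiableWithinAt_of_mem (μ := (volume : Measure E))
    filter_upwards [hae] with x hx hxn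
    exact (hx hxn).differentiableAt ((Metric.isOpen_ball).mem_nhds hxn)
  filter_upwards [ae_all_iff.mpr h] with x hx
  obtain ⟨n, hn⟩ := exists_nat_gt ‖x‖
  exact hx n (by simpa [Metric.mem_ball] using hn)

lemma gradient_measurable (f : E → ℝ) : Measurable (fun x => gradient f x) :=
  (LinearIsometryEquiv.continuous _).measurable.comp (measurable_fderiv ℝ f)

noncomputable def fenchel (W : E → ℝ) (y : E) : ℝ≥0∞ :=
  ⨆ x : E, ENNReal.ofReal (⟪x, y⟫ - W x + W 0)

lemma le_fenchel (W : E → ℝ) (x y : E) :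
    ENNReal.ofReal (⟪x, y⟫ - W x + W 0) ≤ fenchel W y :=
  le_iSup (fun x => ENNReal.ofReal (⟪x, y⟫ - W x + W 0)) x

lemma fenchel_measurable {W : E → ℝ} (hWc : Continuous W) : Measurable (fenchel W) := by
  have hne : Nonempty E := ⟨0⟩
  set e : ℕ → E := TopologicalSpace.denseSeq E with he
  have hd : DenseRange e := TopologicalSpace.denseRange_denseSeq E
  have heq : fenchel W = fun y => ⨆ n : ℕ, ENNReal.ofReal (⟪e n, y⟫ - W (e n) + W 0) := by
    funext y
    refine le_antisymm (iSup_le fun x => ?_)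
      (iSup_le fun n => le_fenchel W (e n) y)
    have hcont : Continuous fun z : E => ENNReal.ofReal (⟪z, y⟫ - W z + W 0) :=
      ENNReal.continuous_ofReal.comp
        (((continuous_id.inner continuous_const).sub hWc).add continuous_const)
    obtain ⟨sq, hsq, hlim⟩ := mem_closure_iff_seq_limit.mp (hd x)
    have htd : Tendsto (fun k => ENNReal.ofReal (⟪sq k, y⟫ - W (sq k) + W 0)) atTop
        (nhds (ENNReal.ofReal (⟪x, y⟫ - W x + W 0))) := (hcont.tendsto x).comp hlim
    refine le_of_tendsto htd (Eventually.of_forall fun k => ?_)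
    obtain ⟨n, hn⟩ := hsq k
    exact hn ▸ le_iSup (fun n => ENNReal.ofReal (⟪e n, y⟫ - W (e n) + W 0)) n
  rw [heq]
  exact Measurable.iSup fun n =>
    (ENNReal.continuous_ofReal.comp
      (((continuous_const.inner continuous_id).sub continuous_const).add
        continuous_const)).measurable

lemma grad_arg_nonneg {W : E → ℝ} (hW : ConvexOn ℝ Set.univ W) {u g : E}
    (hg : HasGradientAt W g u) : 0 ≤ ⟪u, g⟫ - W u + W 0 := by
  have h := convex_subgrad hW hg 0
  have h2 : ⟪g, 0 - u⟫ = -⟪u, g⟫ := by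
    rw [zero_sub, inner_neg_right, real_inner_comm]
  linarith

lemma fenchel_at_grad {W : E → ℝ} (hW : ConvexOn ℝ Set.univ W) {u g : E}
    (hg : HasGradientAt W g u) :
    fenchel W g = ENNReal.ofReal (⟪u, g⟫ - W u + W 0) := by
  refine le_antisymm (iSup_le fun x => ENNReal.ofReal_le_ofReal ?_) (le_fenchel W u g)
  have h := convex_subgrad hW hg x
  have h2 : ⟪g, x - u⟫ = ⟪x, g⟫ - ⟪u, g⟫ := by
    rw [real_inner_comm, inner_sub_left]
  linarith

lemma eq_grad_of_fenchel_eq {W : E → ℝ} (hW : ConvexOn ℝ Set.univ W) {u y : E}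
    (hdiff : DifferentiableAt ℝ W u) (hfin : fenchel W y ≠ ⊤)
    (heq : (fenchel W y).toReal = ⟪u, y⟫ - W u + W 0) : y = gradient W u := by
  refine subgrad_unique hdiff.hasGradientAt fun x => ?_
  have h1 := le_fenchel W x y
  have h2 : ⟪x, y⟫ - W x + W 0 ≤ (fenchel W y).toReal := by
    rcases le_or_gt (⟪x, y⟫ - W x + W 0) 0 with h | h
    · exact h.trans ENNReal.toReal_nonneg
    · calc ⟪x, y⟫ - W x + W 0 = (ENNReal.ofReal (⟪x, y⟫ - W x + W 0)).toReal :=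
            (ENNReal.toReal_ofReal h.le).symm
        _ ≤ (fenchel W y).toReal := ENNReal.toReal_mono hfin h1
  rw [heq] at h2
  have h3 : ⟪y, x - u⟫ = ⟪x, y⟫ - ⟪u, y⟫ := by
    rw [real_inner_comm, inner_sub_left]
  linarith

end Aux

lemma integrable_inner_of_memL2 {α : Type*} [MeasurableSpace α] {μ : Measure α}
    {F : Type*} [NormedAddCommGroup F] [InnerProductSpace ℝ F]
    {f g : α → F} (hf : MemLp f 2 μ) (hg : MemLp g 2 μ) :
    Integrable (fun x => (inner ℝ (f x) (g x) : ℝ)) μ := by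
  have h := L2.integrable_inner (𝕜 := ℝ) (hf.toLp f) (hg.toLp g)
  refine h.congr ?_
  filter_upwards [hf.coeFn_toLp, hg.coeFn_toLp] with x h1 h2
  rw [h1, h2]

lemma integrable_mul_of_memL2 {α : Type*} [MeasurableSpace α] {μ : Measure α}
    {f g : α → ℝ} (hf : MemLp f 2 μ) (hg : MemLp g 2 μ) :
    Integrable (fun x => f x * g x) μ := by
  have h := integrable_inner_of_memL2 hf hg
  simpa [RCLike.inner_apply, mul_comm] using h

section Aux2

variable {d : ℕ}
local notation "E" => EuclideanSpace ℝ (Fin d)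

lemma convex_integrable {μ : Measure E} [IsProbabilityMeasure μ]
    (hac : μ ≪ volume) (hμ2 : MemLp id 2 μ) {W : E → ℝ} (hW : ConvexOn ℝ Set.univ W)
    (hW2 : MemLp (fun u => gradient W u) 2 μ) : Integrable W μ := by
  have hcont : Continuous W := hW.locallyLipschitz.continuous
  have hdiff : ∀ᵐ u ∂μ, DifferentiableAt ℝ W u := (convex_ae_diff W hW).filter_mono hac.ae_le
  obtain ⟨u₁, hu₁⟩ := hdiff.exists
  set g₁ := gradient W u₁ with hg₁
  have hgrad₁ := hu₁.hasGradientAt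
  have hnorm : Integrable (fun u : E => ‖u‖) μ := by
    have h1 : MemLp (id : E → E) 1 μ := hμ2.mono_exponent (by norm_num)
    exact (memLp_one_iff_integrable.mp h1).norm
  have hprod : Integrable (fun u : E => ‖gradient W u‖ * ‖u‖) μ :=
    integrable_mul_of_memL2 hW2.norm hμ2.norm
  refine Integrable.mono'
    (g := fun u => (|W 0| + ‖gradient W u‖ * ‖u‖) + (|W u₁| + ‖g₁‖ * (‖u‖ + ‖u₁‖)))
    ((((integrable_const _).add hprod).add
      ((integrable_const _).add ((hnorm.add (integrable_const _)).const_mul _))))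
    hcont.aestronglyMeasurable ?_
  filter_upwards [hdiff] with u hu
  have hup := convex_subgrad hW hu.hasGradientAt 0
  have hlow := convex_subgrad hW hgrad₁ u
  have e1 : ⟪gradient W u, 0 - u⟫ = -⟪gradient W u, u⟫ := by
    rw [zero_sub, inner_neg_right]
  have e2 : |⟪gradient W u, u⟫| ≤ ‖gradient W u‖ * ‖u‖ := abs_real_inner_le_norm _ _
  have e3 : |⟪g₁, u - u₁⟫| ≤ ‖g₁‖ * (‖u‖ + ‖u₁‖) := by
    refine (abs_real_inner_le_norm _ _).trans ?_
    gcongr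
    exact (norm_sub_le _ _)
  rw [Real.norm_eq_abs, abs_le]
  rw [abs_le] at e2 e3
  constructor
  · nlinarith [abs_nonneg (W 0), abs_nonneg (W u₁), le_abs_self (W u₁), neg_abs_le (W u₁)]
  · nlinarith [abs_nonneg (W 0), abs_nonneg (W u₁), le_abs_self (W 0), neg_abs_le (W 0)]

lemma grad_map_unique {μ : Measure E} [IsProbabilityMeasure μ]
    (hac : μ ≪ volume) (hμ2 : MemLp id 2 μ)
    {V W : E → ℝ} (hV : ConvexOn ℝ Set.univ V) (hW : ConvexOn ℝ Set.univ W)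
    (hV2 : MemLp (fun u => gradient V u) 2 μ) (hW2 : MemLp (fun u => gradient W u) 2 μ)
    (hmap : μ.map (fun u => gradient V u) = μ.map (fun u => gradient W u)) :
    (fun u => gradient V u) =ᵐ[μ] (fun u => gradient W u) := by
  set GV : E → E := fun u => gradient V u with hGV
  set GW : E → E := fun u => gradient W u with hGW
  have hGVm : Measurable GV := gradient_measurable V
  have hGWm : Measurable GW := gradient_measurable W
  have hVc : Continuous V := hV.locallyLipschitz.continuous
  have hWc : Continuous W := hW.locallyLipschitz.continuous
  have hdV : ∀ᵐ u ∂μ, DifferentiableAt ℝ V u := (convex_ae_diff V hV).filter_mono hac.ae_le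
  have hdW : ∀ᵐ u ∂μ, DifferentiableAt ℝ W u := (convex_ae_diff W hW).filter_mono hac.ae_le
  set p : E → ℝ := fun u => ⟪u, GW u⟫ - W u + W 0 with hp
  set q : E → ℝ := fun u => ⟪u, GV u⟫ - V u + V 0 with hq
  set r : E → ℝ := fun u => ⟪u, GV u⟫ - W u + W 0 with hr
  set s : E → ℝ := fun u => ⟪u, GW u⟫ - V u + V 0 with hs
  have hWint : Integrable W μ := convex_integrable hac hμ2 hW hW2
  have hVint : Integrable V μ := convex_integrable hac hμ2 hV hV2
  have hiW : Integrable (fun u => ⟪u, GW u⟫) μ := by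
    simpa using integrable_inner_of_memL2 hμ2 hW2
  have hiV : Integrable (fun u => ⟪u, GV u⟫) μ := by
    simpa using integrable_inner_of_memL2 hμ2 hV2
  have hp_int : Integrable p μ := (hiW.sub hWint).add (integrable_const _)
  have hq_int : Integrable q μ := (hiV.sub hVint).add (integrable_const _)
  have hr_int : Integrable r μ := (hiV.sub hWint).add (integrable_const _)
  have hs_int : Integrable s μ := (hiW.sub hVint).add (integrable_const _)
  have hp_nn : 0 ≤ᵐ[μ] p := by
    filter_upwards [hdW] with u hu
    exact grad_arg_nonneg hW hu.hasGradientAt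
  have hq_nn : 0 ≤ᵐ[μ] q := by
    filter_upwards [hdV] with u hu
    exact grad_arg_nonneg hV hu.hasGradientAt
  have hfWm : Measurable (fenchel W) := fenchel_measurable hWc
  have hfVm : Measurable (fenchel V) := fenchel_measurable hVc
  have hfW_GW : ∀ᵐ u ∂μ, fenchel W (GW u) = ENNReal.ofReal (p u) := by
    filter_upwards [hdW] with u hu
    exact fenchel_at_grad hW hu.hasGradientAt
  have hfV_GV : ∀ᵐ u ∂μ, fenchel V (GV u) = ENNReal.ofReal (q u) := by
    filter_upwards [hdV] with u hu
    exact fenchel_at_grad hV hu.hasGradientAt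
  have hlV : ∫⁻ u, fenchel W (GV u) ∂μ = ∫⁻ u, fenchel W (GW u) ∂μ := by
    rw [← lintegral_map hfWm hGVm, hmap, lintegral_map hfWm hGWm]
  have hlW : ∫⁻ u, fenchel V (GW u) ∂μ = ∫⁻ u, fenchel V (GV u) ∂μ := by
    rw [← lintegral_map hfVm hGWm, ← hmap, lintegral_map hfVm hGVm]
  have hIp : ∫⁻ u, fenchel W (GW u) ∂μ = ENNReal.ofReal (∫ u, p u ∂μ) := by
    rw [lintegral_congr_ae hfW_GW, ← ofReal_integral_eq_lintegral_ofReal hp_int hp_nn]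
  have hIq : ∫⁻ u, fenchel V (GV u) ∂μ = ENNReal.ofReal (∫ u, q u ∂μ) := by
    rw [lintegral_congr_ae hfV_GV, ← ofReal_integral_eq_lintegral_ofReal hq_int hq_nn]
  have hfin : ∫⁻ u, fenchel W (GV u) ∂μ ≠ ⊤ := by
    rw [hlV, hIp]; exact ENNReal.ofReal_ne_top
  have hfinV : ∫⁻ u, fenchel V (GW u) ∂μ ≠ ⊤ := by
    rw [hlW, hIq]; exact ENNReal.ofReal_ne_top
  have hae_fin : ∀ᵐ u ∂μ, fenchel W (GV u) < ⊤ := ae_lt_top (hfWm.comp hGVm) hfin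
  have hae_finV : ∀ᵐ u ∂μ, fenchel V (GW u) < ⊤ := ae_lt_top (hfVm.comp hGWm) hfinV
  set Wr : E → ℝ := fun y => (fenchel W y).toReal with hWr
  set Vr : E → ℝ := fun y => (fenchel V y).toReal with hVr
  have hWr_m : Measurable Wr := hfWm.ennreal_toReal
  have hVr_m : Measurable Vr := hfVm.ennreal_toReal
  have hWrGW : (fun u => Wr (GW u)) =ᵐ[μ] p := by
    filter_upwards [hfW_GW, hp_nn] with u h1 h2
    simp only [hWr, h1, ENNReal.toReal_ofReal h2]
  have hVrGV : (fun u => Vr (GV u)) =ᵐ[μ] q := by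
    filter_upwards [hfV_GV, hq_nn] with u h1 h2
    simp only [hVr, h1, ENNReal.toReal_ofReal h2]
  have hWrGV_int : Integrable (fun u => Wr (GV u)) μ := by
    have h1 : Integrable Wr (μ.map GW) := by
      rw [integrable_map_measure hWr_m.aestronglyMeasurable hGWm.aemeasurable]
      exact hp_int.congr hWrGW.symm
    rw [← hmap] at h1
    exact (integrable_map_measure hWr_m.aestronglyMeasurable hGVm.aemeasurable).mp h1
  have hVrGW_int : Integrable (fun u => Vr (GW u)) μ := by
    have h1 : Integrable Vr (μ.map GV) := by
      rw [integrable_map_measure hVr_m.aestronglyMeasurable hGVm.aemeasurable]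
      exact hq_int.congr hVrGV.symm
    rw [hmap] at h1
    exact (integrable_map_measure hVr_m.aestronglyMeasurable hGWm.aemeasurable).mp h1
  have hIWr : ∫ u, Wr (GV u) ∂μ = ∫ u, p u ∂μ := by
    rw [← integral_map hGVm.aemeasurable hWr_m.aestronglyMeasurable, hmap,
      integral_map hGWm.aemeasurable hWr_m.aestronglyMeasurable]
    exact integral_congr_ae hWrGW
  have hIVr : ∫ u, Vr (GW u) ∂μ = ∫ u, q u ∂μ := by
    rw [← integral_map hGWm.aemeasurable hVr_m.aestronglyMeasurable, ← hmap,
      integral_map hGVm.aemeasurable hVr_m.aestronglyMeasurable]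
    exact integral_congr_ae hVrGV
  have hδ₂_nn : 0 ≤ᵐ[μ] fun u => Wr (GV u) - r u := by
    filter_upwards [hae_fin] with u hu
    have h1 := le_fenchel W u (GV u)
    have h2 : r u ≤ Wr (GV u) := by
      rcases le_or_gt (r u) 0 with h | h
      · exact h.trans ENNReal.toReal_nonneg
      · have h3 := ENNReal.toReal_mono hu.ne h1
        rwa [ENNReal.toReal_ofReal h.le] at h3
    simpa using h2
  have hδ₁_nn : 0 ≤ᵐ[μ] fun u => Vr (GW u) - s u := by
    filter_upwards [hae_finV] with u hu
    have h1 := le_fenchel V u (GW u)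
    have h2 : s u ≤ Vr (GW u) := by
      rcases le_or_gt (s u) 0 with h | h
      · exact h.trans ENNReal.toReal_nonneg
      · have h3 := ENNReal.toReal_mono hu.ne h1
        rwa [ENNReal.toReal_ofReal h.le] at h3
    simpa using h2
  have hsum : ∫ u, p u ∂μ + ∫ u, q u ∂μ = ∫ u, r u ∂μ + ∫ u, s u ∂μ := by
    rw [← integral_add hp_int hq_int, ← integral_add hr_int hs_int]
    apply integral_congr_ae
    filter_upwards with u
    simp only [hp, hq, hr, hs]
    ring
  have hI₂ : ∫ u, (Wr (GV u) - r u) ∂μ = ∫ u, p u ∂μ - ∫ u, r u ∂μ := by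
    rw [integral_sub hWrGV_int hr_int, hIWr]
  have hI₁ : ∫ u, (Vr (GW u) - s u) ∂μ = ∫ u, q u ∂μ - ∫ u, s u ∂μ := by
    rw [integral_sub hVrGW_int hs_int, hIVr]
  have h2nn : 0 ≤ ∫ u, (Wr (GV u) - r u) ∂μ := integral_nonneg_of_ae hδ₂_nn
  have h1nn : 0 ≤ ∫ u, (Vr (GW u) - s u) ∂μ := integral_nonneg_of_ae hδ₁_nn
  have h20 : ∫ u, (Wr (GV u) - r u) ∂μ = 0 := by
    rw [hI₂] at h2nn ⊢
    rw [hI₁] at h1nn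
    linarith
  have hδ₂_zero : (fun u => Wr (GV u) - r u) =ᵐ[μ] 0 :=
    (integral_eq_zero_iff_of_nonneg_ae hδ₂_nn (hWrGV_int.sub hr_int)).mp h20
  filter_upwards [hδ₂_zero, hae_fin, hdW] with u h0 hfin' hWu
  have heq : Wr (GV u) = r u := by
    have := sub_eq_zero.mp (by simpa using h0)
    exact this
  exact eq_grad_of_fenchel_eq hW hWu hfin'.ne heq

lemma gradient_add' {d : ℕ} {f g : EuclideanSpace ℝ (Fin d) → ℝ} {u : EuclideanSpace ℝ (Fin d)}
    (hf : DifferentiableAt ℝ f u) (hg : DifferentiableAt ℝ g u) :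
    HasGradientAt (fun x => f x + g x) (gradient f u + gradient g u) u := by
  rw [hasGradientAt_iff_hasFDerivAt]
  have h1 := hasGradientAt_iff_hasFDerivAt.mp hf.hasGradientAt
  have h2 := hasGradientAt_iff_hasFDerivAt.mp hg.hasGradientAt
  have h3 := h1.add h2
  simp [map_add] at h3 ⊢
  exact h3

end Aux2

/-- for the multivariate rank dependent utility functional
Φ(X) = E[Q_X(U)·φ(U)] = ∫ ⟪Q_X(u), φ(u)⟫ dμ(u), if X and Z are μ-comonotonic
(X = Q_X(U), Z = Q_Z(U) for a common U =_d μ), then Φ(X+Z) = Φ(X) + Φ(Z). -/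
theorem stmt_17 {d : ℕ} {Ω : Type*} [MeasurableSpace Ω]
    (P : Measure Ω) [IsProbabilityMeasure P]
    (μ : Measure (EuclideanSpace ℝ (Fin d))) [IsProbabilityMeasure μ]
    (hac : μ ≪ volume) (hμ2 : MemLp id 2 μ)
    (U : Ω → EuclideanSpace ℝ (Fin d)) (hU : Measurable U) (hUlaw : P.map U = μ)
    (φv : EuclideanSpace ℝ (Fin d) → EuclideanSpace ℝ (Fin d)) (hφ : MemLp φv 2 μ)
    (X Z : Ω → EuclideanSpace ℝ (Fin d))
    (hX2 : MemLp X 2 P) (hZ2 : MemLp Z 2 P)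
    (QX QZ QXZ : EuclideanSpace ℝ (Fin d) → EuclideanSpace ℝ (Fin d))
    (VX VZ W : EuclideanSpace ℝ (Fin d) → ℝ)
    (hVX : ConvexOn ℝ Set.univ VX) (hVZ : ConvexOn ℝ Set.univ VZ)
    (hW : ConvexOn ℝ Set.univ W)
    (hQX : ∀ᵐ u ∂μ, QX u = gradient VX u) (hQZ : ∀ᵐ u ∂μ, QZ u = gradient VZ u)
    (hQXZ : ∀ᵐ u ∂μ, QXZ u = gradient W u)
    (hpushX : μ.map QX = P.map X) (hpushZ : μ.map QZ = P.map Z)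
    (hpushXZ : μ.map QXZ = P.map (fun ω => X ω + Z ω))
    (hXU : ∀ᵐ ω ∂P, X ω = QX (U ω)) (hZU : ∀ᵐ ω ∂P, Z ω = QZ (U ω)) :
    ∫ u, ⟪QXZ u, φv u⟫ ∂μ = ∫ u, ⟪QX u, φv u⟫ ∂μ + ∫ u, ⟪QZ u, φv u⟫ ∂μ := by
  set V : EuclideanSpace ℝ (Fin d) → ℝ := fun u => VX u + VZ u with hVdef
  have hVconv : ConvexOn ℝ Set.univ V := hVX.add hVZ
  have hdVX : ∀ᵐ u ∂μ, DifferentiableAt ℝ VX u :=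
    (convex_ae_diff VX hVX).filter_mono hac.ae_le
  have hdVZ : ∀ᵐ u ∂μ, DifferentiableAt ℝ VZ u :=
    (convex_ae_diff VZ hVZ).filter_mono hac.ae_le
  have hGsum : ∀ᵐ u ∂μ, gradient V u = gradient VX u + gradient VZ u := by
    filter_upwards [hdVX, hdVZ] with u h1 h2
    exact (gradient_add' h1 h2).gradient
  have hQXae : AEMeasurable QX μ := (gradient_measurable VX).aemeasurable.congr (hQX.mono fun _ h => h.symm)
  have hQZae : AEMeasurable QZ μ := (gradient_measurable VZ).aemeasurable.congr (hQZ.mono fun _ h => h.symm)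
  have hQXZae : AEMeasurable QXZ μ := (gradient_measurable W).aemeasurable.congr (hQXZ.mono fun _ h => h.symm)
  -- MemLp transfers
  have hQX2 : MemLp QX 2 μ := by
    have h1 : MemLp id 2 (P.map X) :=
      (memLp_map_measure_iff aestronglyMeasurable_id hX2.aestronglyMeasurable.aemeasurable).mpr
        (by simpa [Function.comp] using hX2)
    rw [← hpushX] at h1
    simpa [Function.comp] using (memLp_map_measure_iff aestronglyMeasurable_id hQXae).mp h1
  have hQZ2 : MemLp QZ 2 μ := by
    have h1 : MemLp id 2 (P.map Z) :=
      (memLp_map_measure_iff aestronglyMeasurable_id hZ2.aestronglyMeasurable.aemeasurable).mpr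
        (by simpa [Function.comp] using hZ2)
    rw [← hpushZ] at h1
    simpa [Function.comp] using (memLp_map_measure_iff aestronglyMeasurable_id hQZae).mp h1
  have hXZ2 : MemLp (fun ω => X ω + Z ω) 2 P := hX2.add hZ2
  have hQXZ2 : MemLp QXZ 2 μ := by
    have h1 : MemLp id 2 (P.map (fun ω => X ω + Z ω)) :=
      (memLp_map_measure_iff aestronglyMeasurable_id hXZ2.aestronglyMeasurable.aemeasurable).mpr
        (by simpa [Function.comp] using hXZ2)
    rw [← hpushXZ] at h1
    simpa [Function.comp] using (memLp_map_measure_iff aestronglyMeasurable_id hQXZae).mp h1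
  have hgV2 : MemLp (fun u => gradient V u) 2 μ := by
    refine MemLp.ae_eq ?_ (hQX2.add hQZ2)
    filter_upwards [hGsum, hQX, hQZ] with u h1 h2 h3
    rw [Pi.add_apply, h2, h3, ← h1]
  have hgW2 : MemLp (fun u => gradient W u) 2 μ := MemLp.ae_eq hQXZ hQXZ2
  -- law equality
  have hXZlaw : P.map (fun ω => X ω + Z ω) = μ.map (fun u => QX u + QZ u) := by
    have h1 : (fun ω => X ω + Z ω) =ᵐ[P] (fun ω => QX (U ω) + QZ (U ω)) := by
      filter_upwards [hXU, hZU] with ω h1 h2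
      rw [h1, h2]
    rw [Measure.map_congr h1]
    have haem : AEMeasurable (fun u => QX u + QZ u) (P.map U) := by
      rw [hUlaw]; exact hQXae.add hQZae
    have hmm := AEMeasurable.map_map_of_aemeasurable haem hU.aemeasurable
    rw [hUlaw] at hmm
    exact hmm.symm
  have hmap : μ.map (fun u => gradient V u) = μ.map (fun u => gradient W u) := by
    have e1 : μ.map (fun u => gradient V u) = μ.map (fun u => QX u + QZ u) := by
      refine Measure.map_congr ?_
      filter_upwards [hGsum, hQX, hQZ] with u a b c
      rw [a, b, c]
    have e2 : μ.map (fun u => gradient W u) = μ.map QXZ := Measure.map_congr (hQXZ.mono fun _ h => h.symm)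
    rw [e1, e2, hpushXZ, hXZlaw]
  have hkey := grad_map_unique hac hμ2 hVconv hW hgV2 hgW2 hmap
  have hfinal : QXZ =ᵐ[μ] fun u => QX u + QZ u := by
    filter_upwards [hQXZ, hkey, hGsum, hQX, hQZ] with u h1 h2 h3 h4 h5
    rw [h1, ← h2, h3, ← h4, ← h5]
  have hintX : Integrable (fun u => ⟪QX u, φv u⟫) μ := integrable_inner_of_memL2 hQX2 hφ
  have hintZ : Integrable (fun u => ⟪QZ u, φv u⟫) μ := integrable_inner_of_memL2 hQZ2 hφ
  calc ∫ u, ⟪QXZ u, φv u⟫ ∂μ = ∫ u, (⟪QX u, φv u⟫ + ⟪QZ u, φv u⟫) ∂μ := by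
        refine integral_congr_ae ?_
        filter_upwards [hfinal] with u h
        rw [h, inner_add_left]
    _ = ∫ u, ⟪QX u, φv u⟫ ∂μ + ∫ u, ⟪QZ u, φv u⟫ ∂μ := integral_add hintX hintZ
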